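/- arXiv:1703.08908 — 2 statements merged into one kernel-verified Lean document; each statement's English description precedes it below -/
import Mathlib

section
/- Let n ≥ 1. Let X be a topological space, Φ : S^n → X a continuous map, and f : S^{n+1} → S^n a continuous map that is not nullhomotopic. Suppose G : B^{n+2} → X is a continuous map whose restriction to the boundary sphere S^{n+1} equals Φ ∘ f. Then there exists no continuous map H : G(B^{n+2}) → S^n defined on the image G(B^{n+2}) ⊆ X (with its subspace topology) satisfying H(Φ(x)) = x for all x ∈ S^n. -/
open Metric

/-- If `f : S^{n+1} → S^n` is continuous and not nullhomotopic, `Φ : S^n → X` is continuous, and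
`G : B^{n+2} → X` is a continuous map restricting to `Φ ∘ f` on the boundary sphere, then there
is no continuous map `H` on the image `G(B^{n+2})` with `H (Φ x) = x` for all `x ∈ S^n`. -/
theorem no_retraction_on_image (n : ℕ) (hn : 1 ≤ n) (X : Type*) [TopologicalSpace X]
    (Φ : C(sphere (0 : EuclideanSpace ℝ (Fin (n + 1))) 1, X))
    (f : C(sphere (0 : EuclideanSpace ℝ (Fin (n + 2))) 1,
      sphere (0 : EuclideanSpace ℝ (Fin (n + 1))) 1))
    (hf : ¬ f.Nullhomotopic)
    (G : C(closedBall (0 : EuclideanSpace ℝ (Fin (n + 2))) 1, X))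
    (hG : ∀ x : sphere (0 : EuclideanSpace ℝ (Fin (n + 2))) 1,
      G ⟨x, sphere_subset_closedBall x.2⟩ = Φ (f x)) :
    ¬ ∃ H : C(Set.range G, sphere (0 : EuclideanSpace ℝ (Fin (n + 1))) 1),
        ∀ (x : sphere (0 : EuclideanSpace ℝ (Fin (n + 1))) 1) (hx : Φ x ∈ Set.range G),
          H ⟨Φ x, hx⟩ = x := by
  rintro ⟨H, hH⟩
  -- the inclusion of the sphere into the closed ball
  set incl : C(sphere (0 : EuclideanSpace ℝ (Fin (n + 2))) 1,
      closedBall (0 : EuclideanSpace ℝ (Fin (n + 2))) 1) :=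
    ⟨fun x => ⟨x, sphere_subset_closedBall x.2⟩, by fun_prop⟩ with hincl
  -- corestriction of G to its range
  set G' : C(closedBall (0 : EuclideanSpace ℝ (Fin (n + 2))) 1, Set.range G) :=
    ⟨fun x => ⟨G x, ⟨x, rfl⟩⟩, by continuity⟩ with hG'
  have hcontr : ContractibleSpace (closedBall (0 : EuclideanSpace ℝ (Fin (n + 2))) 1) :=
    (convex_closedBall _ _).contractibleSpace ⟨0, mem_closedBall_self one_pos.le⟩
  have hid := id_nullhomotopic (closedBall (0 : EuclideanSpace ℝ (Fin (n + 2))) 1)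
  have hincl_null : incl.Nullhomotopic := by
    have := hid.comp_left incl
    simpa using this
  have hnull : ((H.comp G').comp incl).Nullhomotopic := hincl_null.comp_right (H.comp G')
  apply hf
  have : (H.comp G').comp incl = f := by
    refine ContinuousMap.ext fun x => ?_
    have hmem : Φ (f x) ∈ Set.range G := ⟨⟨x, sphere_subset_closedBall x.2⟩, hG x⟩
    have : G' (incl x) = ⟨Φ (f x), hmem⟩ := by
      apply Subtype.ext
      exact hG x
    simp only [ContinuousMap.comp_apply, this]
    exact hH (f x) hmem
  rwa [this] at hnull
end

section
/- Let n ≥ 2 and let X be a metric space. Suppose: (i) every Lipschitz map G : B^{n+2} → X satisfies H^{n+2}(G(B^{n+2})) = 0, where H^{n+2} denotes the (n+2)-dimensional Hausdorff measure on X (pure unrectifiability); and (ii) for every subset E ⊆ X with H^{n+2}(E) = 0, every compact subset C ⊆ E, and every continuous map h : C → S^n, there exists a continuous extension H : E → S^n of h (the extension property implied by Gromov's dimension bound together with the Hurewicz–Wallman characterization of topological dimension). Let Φ : S^n → X be a bi-Lipschitz embedding and let f : S^{n+1} → S^n be a continuous map that is not nullhomotopic. Then the Lipschitz map Φ ∘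 f : S^{n+1} → X admits no Lipschitz extension G : B^{n+2} → X, i.e., there is no Lipschitz map G on the closed unit ball B^{n+2} ⊂ ℝ^{n+2} whose restriction to the boundary sphere S^{n+1} equals Φ ∘ f. -/
open Metric MeasureTheory NNReal

/-- Abstract form of the main theorem: if `X` is a metric space such that (i) Lipschitz images of
`B^{n+2}` are `H^{n+2}`-null, and (ii) continuous maps into `S^n` from compact subsets of
`H^{n+2}`-null sets extend continuously to the whole null set, `Φ : S^n → X` is a bi-Lipschitz
embedding, and `f : S^{n+1} → S^n` is continuous and not nullhomotopic, then `Φ ∘ f` admits no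
Lipschitz extension `G : B^{n+2} → X`. -/
theorem no_lipschitz_extension_of_unrectifiable (n : ℕ) (hn : 2 ≤ n)
    (X : Type*) [MetricSpace X] [MeasurableSpace X] [BorelSpace X]
    (hi : ∀ (K : ℝ≥0) (G : closedBall (0 : EuclideanSpace ℝ (Fin (n + 2))) 1 → X),
      LipschitzWith K G → μH[(n + 2 : ℝ)] (Set.range G) = 0)
    (hii : ∀ E : Set X, μH[(n + 2 : ℝ)] E = 0 → ∀ C : Set X, C ⊆ E → IsCompact C →
      ∀ h : C(C, sphere (0 : EuclideanSpace ℝ (Fin (n + 1))) 1),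
        ∃ H : C(E, sphere (0 : EuclideanSpace ℝ (Fin (n + 1))) 1),
          ∀ (x : X) (hxC : x ∈ C) (hxE : x ∈ E), H ⟨x, hxE⟩ = h ⟨x, hxC⟩)
    (Φ : sphere (0 : EuclideanSpace ℝ (Fin (n + 1))) 1 → X)
    (L : ℝ) (hL : 1 ≤ L)
    (hΦ : ∀ x y : sphere (0 : EuclideanSpace ℝ (Fin (n + 1))) 1,
      L⁻¹ * dist x y ≤ dist (Φ x) (Φ y) ∧ dist (Φ x) (Φ y) ≤ L * dist x y)
    (f : C(sphere (0 : EuclideanSpace ℝ (Fin (n + 2))) 1,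
      sphere (0 : EuclideanSpace ℝ (Fin (n + 1))) 1))
    (hf : ¬ f.Nullhomotopic) :
    ¬ ∃ (K : ℝ≥0) (G : closedBall (0 : EuclideanSpace ℝ (Fin (n + 2))) 1 → X),
        LipschitzWith K G ∧
        ∀ x : sphere (0 : EuclideanSpace ℝ (Fin (n + 2))) 1,
          G ⟨x, sphere_subset_closedBall x.2⟩ = Φ (f x) := by
  rintro ⟨K, G, hG, hGΦ⟩
  have hL0 : (0 : ℝ) < L := lt_of_lt_of_le one_pos hL
  -- Φ is injective
  have hΦinj : Function.Injective Φ := by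
    intro a b hab
    have := (hΦ a b).1
    rw [hab, dist_self] at this
    have hd : dist a b ≤ 0 := by
      have hLinv : (0 : ℝ) < L⁻¹ := inv_pos.mpr hL0
      nlinarith [@dist_nonneg _ _ a b]
    exact dist_le_zero.mp hd
  set ι : sphere (0 : EuclideanSpace ℝ (Fin (n + 2))) 1 →
      closedBall (0 : EuclideanSpace ℝ (Fin (n + 2))) 1 :=
    fun x => ⟨x, sphere_subset_closedBall x.2⟩ with hι
  have hιcont : Continuous ι := Continuous.subtype_mk continuous_subtype_val _
  set E : Set X := Set.range G with hE
  have hEnull : μH[(n + 2 : ℝ)] E = 0 := hi K G hG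
  set C : Set X := Set.range (fun x => G (ι x)) with hC
  have hCE : C ⊆ E := by
    rintro c ⟨x, rfl⟩
    exact ⟨ι x, rfl⟩
  have hCcomp : IsCompact C := isCompact_range (hG.continuous.comp hιcont)
  -- every element of C is in the image of Φ
  have hspec : ∀ c : C, ∃ y, Φ y = (c : X) := by
    rintro ⟨c, x, rfl⟩
    exact ⟨f x, (hGΦ x).symm⟩
  set ψ : C → sphere (0 : EuclideanSpace ℝ (Fin (n + 1))) 1 :=
    fun c => Classical.choose (hspec c) with hψdef
  have hψ : ∀ c : C, Φ (ψ c) = (c : X) := fun c => Classical.choose_spec (hspec c)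
  have hψlip : LipschitzWith ⟨L, le_of_lt hL0⟩ ψ := by
    apply LipschitzWith.of_dist_le_mul
    intro a b
    have h1 := (hΦ (ψ a) (ψ b)).1
    rw [hψ a, hψ b] at h1
    have h2 : dist (ψ a) (ψ b) ≤ L * dist (a : X) (b : X) := by
      have := mul_le_mul_of_nonneg_left h1 (le_of_lt hL0)
      rwa [← mul_assoc, mul_inv_cancel₀ (ne_of_gt hL0), one_mul] at this
    exact h2
  set h : C(C, sphere (0 : EuclideanSpace ℝ (Fin (n + 1))) 1) :=
    ⟨ψ, hψlip.continuous⟩ with hh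
  obtain ⟨H, hHext⟩ := hii E hEnull C hCE hCcomp h
  -- the continuous map from the ball to the sphere S^n
  set g : closedBall (0 : EuclideanSpace ℝ (Fin (n + 2))) 1 →
      sphere (0 : EuclideanSpace ℝ (Fin (n + 1))) 1 :=
    fun b => H ⟨G b, ⟨b, rfl⟩⟩ with hg
  have hgcont : Continuous g :=
    H.continuous.comp (Continuous.subtype_mk hG.continuous _)
  -- on the boundary, g agrees with f
  have hgf : ∀ x : sphere (0 : EuclideanSpace ℝ (Fin (n + 2))) 1, g (ι x) = f x := by
    intro x
    have hxC : G (ι x) ∈ C := ⟨x, rfl⟩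
    have hxE : G (ι x) ∈ E := hCE hxC
    have h1 : g (ι x) = h ⟨G (ι x), hxC⟩ := hHext _ hxC hxE
    have h2 : Φ (h ⟨G (ι x), hxC⟩) = G (ι x) := hψ _
    rw [h1]
    exact hΦinj (h2.trans (hGΦ x))
  -- membership lemma for the radial contraction
  have hmem : ∀ (t : unitInterval) (x : sphere (0 : EuclideanSpace ℝ (Fin (n + 2))) 1),
      (1 - (t : ℝ)) • (x : EuclideanSpace ℝ (Fin (n + 2))) ∈
        closedBall (0 : EuclideanSpace ℝ (Fin (n + 2))) 1 := by
    intro t x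
    have hx : ‖(x : EuclideanSpace ℝ (Fin (n + 2)))‖ = 1 := by
      simpa [dist_eq_norm] using x.2
    rw [mem_closedBall, dist_eq_norm, sub_zero, norm_smul, hx, mul_one, Real.norm_eq_abs,
      abs_of_nonneg (by linarith [t.2.2] : (0 : ℝ) ≤ 1 - (t : ℝ))]
    linarith [t.2.1]
  -- build the nullhomotopy
  apply hf
  refine ⟨g ⟨0, by simp⟩, ⟨⟨⟨fun p => g ⟨(1 - (p.1 : ℝ)) • (p.2 : EuclideanSpace ℝ (Fin (n + 2))),
      hmem p.1 p.2⟩, ?_⟩, ?_, ?_⟩⟩⟩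
  · exact hgcont.comp (Continuous.subtype_mk
      (Continuous.smul (continuous_const.sub (continuous_subtype_val.comp continuous_fst)) (continuous_subtype_val.comp continuous_snd)) _)
  · intro x
    have : (⟨(1 - ((0 : unitInterval) : ℝ)) • (x : EuclideanSpace ℝ (Fin (n + 2))),
        hmem 0 x⟩ : closedBall (0 : EuclideanSpace ℝ (Fin (n + 2))) 1) = ι x := by
      apply Subtype.ext
      simp
      rfl
    simp only [this]
    exact hgf x
  · intro x
    have : (⟨(1 - ((1 : unitInterval) : ℝ)) • (x : EuclideanSpace ℝ (Fin (n + 2))),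
        hmem 1 x⟩ : closedBall (0 : EuclideanSpace ℝ (Fin (n + 2))) 1) =
        ⟨0, by simp⟩ := by
      apply Subtype.ext
      simp
    simp only [this]
    rfl
end
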